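/- If T is a tree of height at most 2ℓ+1 (i.e., there exists a root r whose eccentricity is at most 2ℓ+1), then one ℓ-visibility cop suffices: c_ℓ(T) = 1. -/

import Mathlib

namespace CopsRobber

open Classical

noncomputable section

variable {V : Type*}

/-- Observation available to the cops: the robber's position is revealed iff some cop
is within graph distance `ℓ` of the robber. -/
def obs (G : SimpleGraph V) (ℓ : ℕ∞) {k : ℕ} (p : Fin k → V) (r : V) : Option V :=
  if ∃ i, (G.dist (p i) r : ℕ∞) ≤ ℓ then some r else none

/-- A strategy for `k` cops on `G`: initial positions, and a move function depending on the
history of observations and the current cop positions.  Each cop moves along an edge or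
passes. -/
structure CopStrategy (G : SimpleGraph V) (k : ℕ) where
  init : Fin k → V
  move : List (Option V) → (Fin k → V) → Fin k → V
  valid : ∀ h p i, move h p i = p i ∨ G.Adj (p i) (move h p i)

/-- A robber trajectory: in each round the robber moves along an edge or passes. -/
def RobberWalk (G : SimpleGraph V) (R : ℕ → V) : Prop :=
  ∀ t, R (t + 1) = R t ∨ G.Adj (R t) (R (t + 1))

/-- The play of the game: cop positions and observation history at the end of each round.
In round `t+1` the cops move first (observing the robber at his position of round `t` if
within range), then the robber moves (and is observed at his new position if within range). -/
def play (G : SimpleGraph V) (ℓ : ℕ∞) {k : ℕ} (σ : CopStrategy G k) (R : ℕ → V) :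
    ℕ → (Fin k → V) × List (Option V)
  | 0 => (σ.init, [obs G ℓ σ.init (R 0)])
  | t + 1 =>
    let s := play G ℓ σ R t
    let p := σ.move s.2 s.1
    (p, (s.2 ++ [obs G ℓ p (R t)]) ++ [obs G ℓ p (R (t + 1))])

/-- Positions of the cops at the end of round `t`. -/
def copsAt (G : SimpleGraph V) (ℓ : ℕ∞) {k : ℕ} (σ : CopStrategy G k) (R : ℕ → V)
    (t : ℕ) : Fin k → V :=
  (play G ℓ σ R t).1

/-- The cops capture the robber: some cop occupies the robber's vertex, either
simultaneously or by moving onto it mid-round. -/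
def Captures (G : SimpleGraph V) (ℓ : ℕ∞) {k : ℕ} (σ : CopStrategy G k) (R : ℕ → V) : Prop :=
  ∃ t i, copsAt G ℓ σ R t i = R t ∨ copsAt G ℓ σ R (t + 1) i = R t

/-- The cops see the robber: some cop comes within distance `ℓ` of the robber. -/
def Sees (G : SimpleGraph V) (ℓ : ℕ∞) {k : ℕ} (σ : CopStrategy G k) (R : ℕ → V) : Prop :=
  ∃ t i, (G.dist (copsAt G ℓ σ R t i) (R t) : ℕ∞) ≤ ℓ ∨
    (G.dist (copsAt G ℓ σ R (t + 1) i) (R t) : ℕ∞) ≤ ℓ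

/-- `c_ℓ(G)`: the minimum number of cops that guarantee capture of the robber in the
`ℓ`-visibility Cops and Robber game. -/
def visCopNumber (G : SimpleGraph V) (ℓ : ℕ∞) : ℕ :=
  sInf {k | ∃ σ : CopStrategy G k, ∀ R, RobberWalk G R → Captures G ℓ σ R}

/-- `c'_ℓ(G)`: the minimum number of cops that guarantee seeing the robber in the
`ℓ`-visibility Cops and Robber game. -/
def visSeeNumber (G : SimpleGraph V) (ℓ : ℕ∞) : ℕ :=
  sInf {k | ∃ σ : CopStrategy G k, ∀ R, RobberWalk G R → Sees G ℓ σ R}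

/-- The classical cop number: the game with full visibility. -/
def copNumber (G : SimpleGraph V) : ℕ := visCopNumber G ⊤

end
end CopsRobber



namespace TreeAux

variable {V : Type*} {T : SimpleGraph V}

open SimpleGraph

/-- Any two paths between the same pair of vertices in a tree are equal. -/
lemma path_unique (hT : T.IsTree) {u v : V} {p q : T.Walk u v}
    (hp : p.IsPath) (hq : q.IsPath) : p = q := by
  obtain ⟨P, -, hP⟩ := hT.existsUnique_path u v
  rw [hP p hp, hP q hq]

/-- In a tree, every path realizes the distance. -/
lemma path_length_eq_dist (hT : T.IsTree) {u v : V} {p : T.Walk u v}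
    (hp : p.IsPath) : p.length = T.dist u v := by
  obtain ⟨w, hw⟩ := hT.isConnected.exists_walk_length_eq_dist u v
  rw [path_unique hT hp (w.isPath_of_length_eq_dist hw), hw]

/-- The canonical path between two vertices of a tree. -/
noncomputable def geo (hT : T.IsTree) (u v : V) : T.Walk u v :=
  (hT.isConnected.exists_walk_length_eq_dist u v).choose

lemma geo_length (hT : T.IsTree) (u v : V) : (geo hT u v).length = T.dist u v :=
  (hT.isConnected.exists_walk_length_eq_dist u v).choose_spec

lemma geo_isPath (hT : T.IsTree) (u v : V) : (geo hT u v).IsPath :=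
  SimpleGraph.Walk.isPath_of_length_eq_dist _ (geo_length hT u v)

/-- Betweenness in the tree metric. -/
def Btw (T : SimpleGraph V) (x y z : V) : Prop :=
  T.dist x z = T.dist x y + T.dist y z

lemma btw_refl_left (hT : T.IsTree) (x z : V) : Btw T x x z := by
  simp [Btw, SimpleGraph.dist_self]

lemma btw_self_right (hT : T.IsTree) (x z : V) : Btw T x z z := by
  simp [Btw, SimpleGraph.dist_self]

lemma btw_iff_mem_support (hT : T.IsTree) {x y z : V} :
    Btw T x y z ↔ y ∈ (geo hT x z).support := by
  classical
  constructor
  · intro h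
    have hcat : ((geo hT x y).append (geo hT y z)).length = T.dist x z := by
      rw [SimpleGraph.Walk.length_append, geo_length, geo_length, h]
    have hpath : ((geo hT x y).append (geo hT y z)).IsPath :=
      SimpleGraph.Walk.isPath_of_length_eq_dist _ hcat
    have := path_unique hT hpath (geo_isPath hT x z)
    rw [← this]
    exact (SimpleGraph.Walk.mem_support_append_iff _ _).mpr (Or.inl (SimpleGraph.Walk.end_mem_support _))
  · intro h
    have hspec := ((geo hT x z).take_spec h).symm
    have h1 : ((geo hT x z).takeUntil y h).IsPath := (geo_isPath hT x z).takeUntil h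
    have h2 : ((geo hT x z).dropUntil y h).IsPath := (geo_isPath hT x z).dropUntil h
    have := geo_length hT x z
    rw [hspec, SimpleGraph.Walk.length_append,
      path_length_eq_dist hT h1, path_length_eq_dist hT h2] at this
    exact this.symm

end TreeAux

namespace TreeAux
variable {V : Type*} {T : SimpleGraph V}
open SimpleGraph

lemma dist_adj_one (hT : T.IsTree) {a b : V} (h : T.Adj a b) : T.dist a b = 1 :=
  (SimpleGraph.dist_eq_one_iff_adj).mpr h

/-- In a tree, for adjacent `a b`, the distances from any `x` differ by exactly one. -/
lemma adj_dist (hT : T.IsTree) {a b : V} (h : T.Adj a b) (x : V) :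
    T.dist x b = T.dist x a + 1 ∨ T.dist x a = T.dist x b + 1 := by
  classical
  by_cases hmem : b ∈ (geo hT x a).support
  · right
    have hb : Btw T x b a := (btw_iff_mem_support hT).mpr hmem
    rw [Btw] at hb
    rw [hb, dist_adj_one hT h.symm]
  · left
    have hpath : ((geo hT x a).concat h).IsPath := by
      rw [SimpleGraph.Walk.isPath_def, SimpleGraph.Walk.support_concat]
      exact List.Nodup.append (geo_isPath hT x a).support_nodup (List.nodup_singleton b)
        (by simpa using hmem)
    have := path_length_eq_dist hT hpath
    rw [SimpleGraph.Walk.length_concat, geo_length] at this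
    exact this.symm

lemma geo_getVert_dist [DecidableEq V] (hT : T.IsTree) {x z y : V} (h : y ∈ (geo hT x z).support) :
    (geo hT x z).getVert (T.dist x y) = y := by
  have hlen : ((geo hT x z).takeUntil y h).length = T.dist x y :=
    path_length_eq_dist hT ((geo_isPath hT x z).takeUntil h)
  conv_lhs => rw [← (geo hT x z).take_spec h]
  rw [SimpleGraph.Walk.getVert_append, ← hlen]
  simp only [lt_self_iff_false, if_false, Nat.sub_self, SimpleGraph.Walk.getVert_zero]

/-- Uniqueness of the neighbour of `z` closer to `x`. -/
lemma closer_unique (hT : T.IsTree) {a1 a2 z x : V} (h1 : T.Adj a1 z) (h2 : T.Adj a2 z)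
    (d1 : T.dist x a1 + 1 = T.dist x z) (d2 : T.dist x a2 + 1 = T.dist x z) : a1 = a2 := by
  classical
  have hb1 : Btw T x a1 z := by rw [Btw, dist_adj_one hT h1]; omega
  have hb2 : Btw T x a2 z := by rw [Btw, dist_adj_one hT h2]; omega
  have e1 := geo_getVert_dist hT ((btw_iff_mem_support hT).mp hb1)
  have e2 := geo_getVert_dist hT ((btw_iff_mem_support hT).mp hb2)
  have hd : T.dist x a1 = T.dist x a2 := by omega
  rw [← e1, ← e2, hd]

lemma getVert_takeUntil [DecidableEq V] (hT : T.IsTree) {x z y : V} (h : y ∈ (geo hT x z).support) {i : ℕ}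
    (hi : i ≤ ((geo hT x z).takeUntil y h).length) :
    ((geo hT x z).takeUntil y h).getVert i = (geo hT x z).getVert i := by
  classical
  conv_rhs => rw [← (geo hT x z).take_spec h]
  rw [SimpleGraph.Walk.getVert_append]
  rcases lt_or_eq_of_le hi with h' | h'
  · rw [if_pos h']
  · subst h'
    simp [SimpleGraph.Walk.getVert_length]

/-- Points between `x` and `v` are linearly ordered by distance from `x`. -/
lemma btw_order (hT : T.IsTree) {x c y v : V} (hc : Btw T x c v) (hy : Btw T x y v)
    (hle : T.dist x c ≤ T.dist x y) : Btw T x c y := by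
  classical
  have hcm := (btw_iff_mem_support hT).mp hc
  have hym := (btw_iff_mem_support hT).mp hy
  have hQpath : ((geo hT x v).takeUntil y hym).IsPath := (geo_isPath hT x v).takeUntil hym
  have hQlen : ((geo hT x v).takeUntil y hym).length = T.dist x y := path_length_eq_dist hT hQpath
  have hcQ : c ∈ ((geo hT x v).takeUntil y hym).support := by
    rw [SimpleGraph.Walk.mem_support_iff_exists_getVert]
    refine ⟨T.dist x c, ?_, by rw [hQlen]; exact hle⟩
    rw [getVert_takeUntil hT hym (by rw [hQlen]; exact hle)]
    exact geo_getVert_dist hT hcm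
  have hQgeo : (geo hT x v).takeUntil y hym = geo hT x y := path_unique hT hQpath (geo_isPath hT x y)
  rw [hQgeo] at hcQ
  exact (btw_iff_mem_support hT).mpr hcQ

end TreeAux

namespace TreeAux
variable {V : Type*} {T : SimpleGraph V}
open SimpleGraph

lemma getVert_mem_support {u v : V} (w : T.Walk u v) (k : ℕ) : w.getVert k ∈ w.support := by
  rcases le_or_gt k w.length with h | h
  · exact SimpleGraph.Walk.mem_support_iff_exists_getVert.mpr ⟨k, rfl, h⟩
  · rw [w.getVert_of_length_le h.le]
    exact SimpleGraph.Walk.end_mem_support w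

lemma btw_chain (hT : T.IsTree) {a b c : V} (h1 : Btw T r a b) (h2 : Btw T r b c) :
    Btw T r a c := by
  have t1 := hT.isConnected.dist_triangle (u := r) (v := a) (w := c)
  have t2 := hT.isConnected.dist_triangle (u := a) (v := b) (w := c)
  rw [Btw] at *
  omega

lemma btw_dist (hT : T.IsTree) {a b : V} (h : Btw T r a b) :
    T.dist a b = T.dist r b - T.dist r a ∧ T.dist r a ≤ T.dist r b := by
  rw [Btw] at h; omega

/-- `c` is a child of `u` in the tree rooted at `r`. -/
def IsChild (T : SimpleGraph V) (r u c : V) : Prop :=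
  T.Adj u c ∧ T.dist r c = T.dist r u + 1

lemma isChild_btw (hT : T.IsTree) {u c : V} (h : IsChild T r u c) : Btw T r u c := by
  rw [Btw, dist_adj_one hT h.1]
  exact h.2

/-- Every strict descendant of `u` lies in the subtree of some child of `u`. -/
lemma exists_child (hT : T.IsTree) {u v : V} (hb : Btw T r u v) (hne : v ≠ u) :
    ∃ c, IsChild T r u c ∧ Btw T r c v := by
  have hpos : 1 ≤ T.dist u v := hT.isConnected.pos_dist_of_ne (Ne.symm hne)
  set c := (geo hT u v).getVert 1 with hc
  have hlen : 0 < (geo hT u v).length := by rw [geo_length]; omega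
  have hadj : T.Adj u c := by
    have := (geo hT u v).adj_getVert_succ (i := 0) hlen
    rwa [SimpleGraph.Walk.getVert_zero] at this
  have hcmem : c ∈ (geo hT u v).support := getVert_mem_support _ 1
  have hbcv : Btw T u c v := (btw_iff_mem_support hT).mpr hcmem
  have hc1 : T.dist u c = 1 := dist_adj_one hT hadj
  rw [Btw, hc1] at hbcv
  rw [Btw] at hb
  have hdepth := adj_dist hT hadj r
  have htri := hT.isConnected.dist_triangle (u := r) (v := c) (w := v)
  have hchild : T.dist r c = T.dist r u + 1 := by omega
  refine ⟨c, ⟨hadj, hchild⟩, ?_⟩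
  rw [Btw]; omega

lemma child_disjoint (hT : T.IsTree) {u c c' v : V} (h : IsChild T r u c) (h' : IsChild T r u c')
    (hv : Btw T r c v) (hv' : Btw T r c' v) : c = c' := by
  have hord : Btw T r c c' := btw_order hT hv hv' (by rw [h.2, h'.2])
  rw [Btw, h.2, h'.2] at hord
  have : T.dist c c' = 0 := by omega
  exact (hT.isConnected.dist_eq_zero_iff).mp this

/-- Step lemma: the robber cannot leave the subtree of a child without passing through `u`. -/
lemma child_step (hT : T.IsTree) {u c x y : V} (hc : IsChild T r u c) (hx : Btw T r c x)
    (hstep : y = x ∨ T.Adj x y) (hy : Btw T r u y) (hne : y ≠ u) : Btw T r c y := by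
  rcases hstep with rfl | hadj
  · exact hx
  rcases adj_dist hT hadj r with hdeep | hup
  · -- y is a child of x
    have hxy : Btw T r x y := by rw [Btw, hdeep, dist_adj_one hT hadj]
    exact btw_chain hT hx hxy
  · -- y is the parent of x
    have hyx : Btw T r y x := by rw [Btw, hup, dist_adj_one hT hadj.symm]
    by_cases hxc : x = c
    · subst hxc
      -- y and u are both "parents" of c; unique
      exfalso
      refine hne (closer_unique hT hadj.symm hc.1 (x := r) (by omega) hc.2.symm)
    · have hcx : 1 ≤ T.dist c x := hT.isConnected.pos_dist_of_ne fun h => hxc h.symm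
      have hrx : T.dist r c ≤ T.dist r x - 1 := by
        have := hx; rw [Btw] at this; omega
      exact btw_order hT hx hyx (by rw [Btw] at hyx; omega)

section Dfs
variable [Fintype V]

open Classical in
/-- The list of children of `u` in the tree rooted at `r`. -/
noncomputable def childList (T : SimpleGraph V) (r u : V) : List V :=
  (Finset.univ.filter fun c => IsChild T r u c).toList

lemma mem_childList {r u c : V} : c ∈ childList T r u ↔ IsChild T r u c := by
  classical
  simp [childList]

/-- Concatenation of the DFS blocks for a list of children. -/
noncomputable def dfsBlocks (T : SimpleGraph V) (r : V) (f : (c : V) → T.Walk c c) (u : V) :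
    List {c // c ∈ childList T r u} → T.Walk u u
  | [] => SimpleGraph.Walk.nil
  | c :: cs =>
      ((SimpleGraph.Walk.cons (mem_childList.mp c.2).1 (f c.1)).concat
        (mem_childList.mp c.2).1.symm).append (dfsBlocks T r f u cs)

/-- The DFS walk of depth `n` below `u`. -/
noncomputable def walkDfs (T : SimpleGraph V) (r : V) : ℕ → (u : V) → T.Walk u u
  | 0, _ => SimpleGraph.Walk.nil
  | n+1, u => dfsBlocks T r (walkDfs T r n) u (childList T r u).attach

lemma walkDfs_mem (hT : T.IsTree) (r : V) :
    ∀ n u v, v ∈ (walkDfs T r n u).support →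
      Btw T r u v ∧ T.dist r v ≤ T.dist r u + n := by
  intro n
  induction n with
  | zero =>
    intro u v hv
    simp [walkDfs, SimpleGraph.Walk.support_nil] at hv
    subst hv
    exact ⟨btw_self_right hT r v, by omega⟩
  | succ n ih =>
    intro u v hv
    rw [walkDfs] at hv
    -- induction over the list of blocks
    generalize (childList T r u).attach = l at hv
    induction l with
    | nil =>
      have hvu : v = u := by simpa [dfsBlocks] using hv
      constructor
      · rw [hvu]; exact btw_self_right hT r u
      · rw [hvu]; omega
    | cons c cs ihl =>
      rw [dfsBlocks] at hv
      rw [SimpleGraph.Walk.mem_support_append_iff] at hv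
      rcases hv with hv | hv
      · rw [SimpleGraph.Walk.concat_eq_append, SimpleGraph.Walk.mem_support_append_iff] at hv
        have hchild := mem_childList.mp c.2
        have hc2 := hchild.2
        have hvc : v ∈ (walkDfs T r n c.1).support ∨ v = u := by
          rcases hv with hv | hv
          · rw [SimpleGraph.Walk.support_cons] at hv
            rcases List.mem_cons.mp hv with h' | hv
            · exact Or.inr h'
            · exact Or.inl hv
          · rw [SimpleGraph.Walk.support_cons, SimpleGraph.Walk.support_nil] at hv
            rcases List.mem_cons.mp hv with h' | hv
            · rw [h']; exact Or.inl (SimpleGraph.Walk.start_mem_support _)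
            · exact Or.inr (List.mem_singleton.mp hv)
        rcases hvc with hv' | hvu
        · obtain ⟨hb, hd⟩ := ih c.1 v hv'
          refine ⟨btw_chain hT (isChild_btw hT hchild) hb, by omega⟩
        · constructor
          · rw [hvu]; exact btw_self_right hT r u
          · rw [hvu]; omega
      · exact ihl hv

end Dfs
end TreeAux

namespace TreeAux
variable {V : Type*} {T : SimpleGraph V}
open SimpleGraph

section Conf
variable [Fintype V]

/-- Induction over the list of DFS blocks. -/
lemma conf_blocks (hT : T.IsTree) {r : V} {ℓ n : ℕ} {R W : ℕ → V}
    (IH : ∀ u' t0', T.dist r u' + n = ℓ + 1 → 1 ≤ T.dist r u' →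
      (∀ k, k ≤ (walkDfs T r n u').length →
        W (t0' + k) = (walkDfs T r n u').getVert k) →
      (∀ k, k ≤ (walkDfs T r n u').length → Btw T r u' (R (t0' + k))) → False)
    {u : V} (hu : T.dist r u + 1 + n = ℓ + 1)
    {c0 : V} (hcs : IsChild T r u c0) :
    ∀ (l : List {c // c ∈ childList T r u}) (t1 : ℕ),
      ((⟨c0, mem_childList.mpr hcs⟩ : {c // c ∈ childList T r u}) ∈ l) →
      (∀ k, k ≤ (dfsBlocks T r (walkDfs T r n) u l).length →
        W (t1 + k) = (dfsBlocks T r (walkDfs T r n) u l).getVert k) →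
      (∀ k, k ≤ (dfsBlocks T r (walkDfs T r n) u l).length → Btw T r c0 (R (t1 + k))) →
      False := by
  intro l
  induction l with
  | nil => intro t1 hmem _ _; simp at hmem
  | cons b cs ihl =>
    intro t1 hmem hmatch hconf
    classical
    have hchild := mem_childList.mp b.2
    have hBlen : ((SimpleGraph.Walk.cons hchild.1 (walkDfs T r n b.1)).concat
        hchild.1.symm).length = (walkDfs T r n b.1).length + 1 + 1 := by
      rw [SimpleGraph.Walk.length_concat, SimpleGraph.Walk.length_cons]
    have htot : (dfsBlocks T r (walkDfs T r n) u (b :: cs)).length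
        = ((SimpleGraph.Walk.cons hchild.1 (walkDfs T r n b.1)).concat hchild.1.symm).length
          + (dfsBlocks T r (walkDfs T r n) u cs).length := by
      rw [dfsBlocks, SimpleGraph.Walk.length_append]
    have hsplit : ∀ i, (dfsBlocks T r (walkDfs T r n) u (b :: cs)).getVert i
        = if i < ((SimpleGraph.Walk.cons hchild.1 (walkDfs T r n b.1)).concat
            hchild.1.symm).length then
            ((SimpleGraph.Walk.cons hchild.1 (walkDfs T r n b.1)).concat hchild.1.symm).getVert i
          else (dfsBlocks T r (walkDfs T r n) u cs).getVert
            (i - ((SimpleGraph.Walk.cons hchild.1 (walkDfs T r n b.1)).concat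
              hchild.1.symm).length) := by
      intro i
      rw [dfsBlocks, SimpleGraph.Walk.getVert_append]
    by_cases hbc : b.1 = c0
    · -- the robber's block: descend
      subst hbc
      refine IH b.1 (t1 + 1) (by rw [hcs.2]; omega) (by rw [hcs.2]; omega) ?_ ?_
      · intro k hk
        have hm := hmatch (1 + k) (by omega)
        have h1 : t1 + 1 + k = t1 + (1 + k) := by omega
        rw [h1, hm, hsplit, if_pos (by omega), SimpleGraph.Walk.concat_eq_append,
          SimpleGraph.Walk.getVert_append]
        rcases lt_or_eq_of_le hk with hlt | heq
        · rw [if_pos (by rw [SimpleGraph.Walk.length_cons]; omega), Nat.add_comm 1 k,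
            SimpleGraph.Walk.getVert_cons_succ]
        · rw [if_neg (by rw [SimpleGraph.Walk.length_cons]; omega)]
          have h2 : 1 + k - (SimpleGraph.Walk.cons hchild.1 (walkDfs T r n b.1)).length = 0 := by
            rw [SimpleGraph.Walk.length_cons]; omega
          rw [h2, SimpleGraph.Walk.getVert_zero, heq, SimpleGraph.Walk.getVert_length]
      · intro k hk
        have := hconf (1 + k) (by omega)
        rwa [← Nat.add_assoc] at this
    · -- skip this block
      have hmem' : (⟨c0, mem_childList.mpr hcs⟩ : {c // c ∈ childList T r u}) ∈ cs := by
        rcases List.mem_cons.mp hmem with heq | h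
        · exact absurd (congrArg Subtype.val heq).symm hbc
        · exact h
      refine ihl (t1 + ((SimpleGraph.Walk.cons hchild.1 (walkDfs T r n b.1)).concat
        hchild.1.symm).length) hmem' ?_ ?_
      · intro k hk
        have hm := hmatch (((SimpleGraph.Walk.cons hchild.1 (walkDfs T r n b.1)).concat
          hchild.1.symm).length + k) (by omega)
        rw [hsplit, if_neg (by omega), Nat.add_sub_cancel_left, ← Nat.add_assoc] at hm
        exact hm
      · intro k hk
        have := hconf (((SimpleGraph.Walk.cons hchild.1 (walkDfs T r n b.1)).concat
          hchild.1.symm).length + k) (by omega)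
        rwa [← Nat.add_assoc] at this

lemma conf_main (hT : T.IsTree) {r : V} {ℓ : ℕ} {R W : ℕ → V}
    (hr : ∀ u, T.dist r u ≤ 2*ℓ+1)
    (hRW : ∀ t, R (t+1) = R t ∨ T.Adj (R t) (R (t+1)))
    (Hfresh : ∀ t, ¬ T.dist (W t) (R t) ≤ ℓ) :
    ∀ n u t0, T.dist r u + n = ℓ + 1 → 1 ≤ T.dist r u →
      (∀ k, k ≤ (walkDfs T r n u).length → W (t0 + k) = (walkDfs T r n u).getVert k) →
      (∀ k, k ≤ (walkDfs T r n u).length → Btw T r u (R (t0 + k))) → False := by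
  intro n
  induction n with
  | zero =>
    intro u t0 hu hdep hmatch hconf
    have hW0 : W t0 = u := by
      have := hmatch 0 (by omega)
      simpa [walkDfs] using this
    have hb := hconf 0 (by omega)
    rw [Btw] at hb
    have hru := hr (R t0)
    simp only [Nat.add_zero] at hb
    refine Hfresh t0 ?_
    rw [hW0]
    omega
  | succ n ih =>
    intro u t0 hu hdep hmatch hconf
    -- the robber is never at u during the interval
    have hnotu : ∀ k, k ≤ (walkDfs T r (n+1) u).length → R (t0 + k) ≠ u := by
      intro k hk hRu
      have hcop : W (t0 + k) ∈ (walkDfs T r (n+1) u).support := by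
        rw [hmatch k hk]; exact getVert_mem_support _ _
      obtain ⟨hbw, hdw⟩ := walkDfs_mem hT r (n+1) u _ hcop
      rw [Btw] at hbw
      refine Hfresh (t0 + k) ?_
      rw [hRu, SimpleGraph.dist_comm]
      omega
    -- the robber stays in the subtree of a fixed child
    obtain ⟨c0, hcs, hc0⟩ := exists_child hT (hconf 0 (by omega)) (by simpa using hnotu 0 (by omega))
    have hcs_all : ∀ k, k ≤ (walkDfs T r (n+1) u).length → Btw T r c0 (R (t0 + k)) := by
      intro k
      induction k with
      | zero => intro _; simpa using hc0
      | succ k ihk =>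
        intro hk
        have h1 : t0 + (k+1) = (t0 + k) + 1 := by omega
        rw [h1]
        refine child_step hT hcs (ihk (by omega)) (hRW (t0 + k)) ?_ ?_
        · rw [← h1]; exact hconf (k+1) hk
        · rw [← h1]; exact hnotu (k+1) hk
    -- apply the block induction
    have hwd : walkDfs T r (n+1) u = dfsBlocks T r (walkDfs T r n) u (childList T r u).attach := by
      rw [walkDfs]
    refine conf_blocks hT ih (by omega) hcs (childList T r u).attach t0 (List.mem_attach _ _) ?_ ?_
    · intro k hk; rw [← hwd] at hk ⊢; exact hmatch k hk
    · intro k hk; rw [← hwd] at hk; exact hcs_all k hk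

/-- If the cop follows the DFS walk and is never within distance `ℓ` of the robber
(neither before nor after the robber's move), we get a contradiction. -/
lemma conf_false (hT : T.IsTree) {r : V} {ℓ : ℕ} {R W : ℕ → V}
    (hr : ∀ u, T.dist r u ≤ 2*ℓ+1)
    (hRW : ∀ t, R (t+1) = R t ∨ T.Adj (R t) (R (t+1)))
    (hW : ∀ t, W t = (walkDfs T r (ℓ+1) r).getVert t)
    (Hfresh : ∀ t, ¬ T.dist (W t) (R t) ≤ ℓ)
    (Hstale : ∀ t, ¬ T.dist (W (t+1)) (R t) ≤ ℓ) : False := by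
  classical
  -- the robber is never at the root
  have hnotr : ∀ t, R t ≠ r := by
    intro t hRt
    have hcop : W t ∈ (walkDfs T r (ℓ+1) r).support := by
      rw [hW t]; exact getVert_mem_support _ _
    obtain ⟨-, hdw⟩ := walkDfs_mem hT r (ℓ+1) r _ hcop
    rw [SimpleGraph.dist_self] at hdw
    rcases le_or_gt (T.dist r (W t)) ℓ with hle | hgt
    · exact Hfresh t (by rw [hRt, SimpleGraph.dist_comm]; omega)
    · have hWt : T.dist r (W t) = ℓ + 1 := by omega
      have htlen : t < (walkDfs T r (ℓ+1) r).length := by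
        by_contra htl
        rw [hW t, SimpleGraph.Walk.getVert_of_length_le _ (by omega)] at hWt
        rw [SimpleGraph.dist_self] at hWt
        omega
      have hadj : T.Adj (W t) (W (t+1)) := by
        rw [hW t, hW (t+1)]
        exact (walkDfs T r (ℓ+1) r).adj_getVert_succ htlen
      have hcop' : W (t+1) ∈ (walkDfs T r (ℓ+1) r).support := by
        rw [hW (t+1)]; exact getVert_mem_support _ _
      obtain ⟨-, hdw'⟩ := walkDfs_mem hT r (ℓ+1) r _ hcop'
      rw [SimpleGraph.dist_self] at hdw'
      rcases adj_dist hT hadj r with h1 | h1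
      · omega
      · exact Hstale t (by rw [hRt, SimpleGraph.dist_comm]; omega)
  -- the robber stays in the subtree of a fixed child of the root
  obtain ⟨c0, hcs, hc0⟩ := exists_child hT (btw_refl_left hT r (R 0)) (hnotr 0)
  have hcs_all : ∀ t, Btw T r c0 (R t) := by
    intro t
    induction t with
    | zero => exact hc0
    | succ t ihk =>
      exact child_step hT hcs ihk (hRW t) (btw_refl_left hT r (R (t+1))) (hnotr (t+1))
  have hwd : walkDfs T r (ℓ+1) r = dfsBlocks T r (walkDfs T r ℓ) r (childList T r r).attach := by
    rw [walkDfs]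
  refine conf_blocks hT (conf_main hT hr hRW Hfresh ℓ) (by rw [SimpleGraph.dist_self]; omega) hcs
    (childList T r r).attach 0 (List.mem_attach _ _) ?_ ?_
  · intro k hk
    rw [← hwd, Nat.zero_add, hW k]
  · intro k _
    rw [Nat.zero_add]
    exact hcs_all k

end Conf
end TreeAux

namespace TreeAux
variable {V : Type*} {T : SimpleGraph V}
open SimpleGraph

/-- One step from `a` towards `b` along the tree path. -/
noncomputable def stepToward (hT : T.IsTree) (a b : V) : V := (geo hT a b).getVert 1

lemma stepToward_adj (hT : T.IsTree) {a b : V} (h : T.dist a b ≠ 0) :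
    T.Adj a (stepToward hT a b) := by
  have hlen : 0 < (geo hT a b).length := by rw [geo_length]; omega
  simpa [stepToward, SimpleGraph.Walk.getVert_zero] using (geo hT a b).adj_getVert_succ (i := 0) hlen

lemma stepToward_dist (hT : T.IsTree) {a b : V} (h : T.dist a b ≠ 0) :
    T.dist (stepToward hT a b) b + 1 = T.dist a b := by
  have hmem : stepToward hT a b ∈ (geo hT a b).support := getVert_mem_support _ _
  have hbtw := (btw_iff_mem_support hT).mpr hmem
  rw [Btw] at hbtw
  rw [dist_adj_one hT (stepToward_adj hT h)] at hbtw
  omega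

lemma stepToward_eq (hT : T.IsTree) {a b : V} (h : T.dist a b = 0) :
    stepToward hT a b = a := by
  have hab : a = b := (hT.isConnected.dist_eq_zero_iff).mp h
  have hlen : (geo hT a b).length = 0 := by rw [geo_length, h]
  rw [stepToward, (geo hT a b).getVert_of_length_le (by omega), hab]

lemma eventually_const (f : ℕ → ℕ) (hf : ∀ t, f (t+1) ≤ f t) :
    ∃ T0, ∀ t, T0 ≤ t → f t = f T0 := by
  have ha : Antitone f := antitone_nat_of_succ_le hf
  obtain ⟨T0, hT0⟩ : sInf (Set.range f) ∈ Set.range f :=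
    Nat.sInf_mem ⟨f 0, 0, rfl⟩
  refine ⟨T0, fun t ht => le_antisymm (ha ht) ?_⟩
  rw [hT0]
  exact Nat.sInf_le ⟨t, rfl⟩

section Grow
variable [Fintype V]

/-- A cop chasing at constant distance forces the robber arbitrarily far away: impossible. -/
lemma grow (hT : T.IsTree) (c x : ℕ → V) (d : ℕ) (hd : 1 ≤ d)
    (h1 : ∀ k, T.dist (c k) (x k) = d)
    (h2 : ∀ k, T.dist (c (k+1)) (x k) = d - 1)
    (h3 : ∀ k, c (k+1) = c k ∨ T.Adj (c k) (c (k+1)))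
    (h4 : ∀ k, x (k+1) = x k ∨ T.Adj (x k) (x (k+1)))
    (h5 : d = 1 → ∀ k, x (k+1) ≠ c k) : False := by
  have key : ∀ k, T.dist (c 0) (x k) = d + k ∧ T.dist (c 0) (c k) = k := by
    intro k
    induction k with
    | zero => exact ⟨by simpa using h1 0, by simp [SimpleGraph.dist_self]⟩
    | succ k ihk =>
      obtain ⟨hx, hc⟩ := ihk
      have hcc : T.dist (c k) (c (k+1)) ≤ 1 := by
        rcases h3 k with he | ha
        · rw [he, SimpleGraph.dist_self]; omega
        · rw [dist_adj_one hT ha]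
      have htri1 := hT.isConnected.dist_triangle (u := c 0) (v := c (k+1)) (w := x k)
      have htri2 := hT.isConnected.dist_triangle (u := c 0) (v := c k) (w := c (k+1))
      have h2k := h2 k
      have hC : T.dist (c 0) (c (k+1)) = k + 1 := by omega
      have hxadj : T.Adj (x k) (x (k+1)) := by
        rcases h4 k with he | ha
        · exfalso
          have := h1 (k+1)
          rw [he] at this
          omega
        · exact ha
      rcases adj_dist hT hxadj (c 0) with hgood | hbad
      · exact ⟨by omega, hC⟩
      · exfalso
        rcases Nat.lt_or_ge 1 d with hd2 | hd1'
        · -- d ≥ 2 : use the neighbour of `x k` towards the cop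
          have hdxc : T.dist (x k) (c (k+1)) = d - 1 := by
            rw [SimpleGraph.dist_comm]; exact h2 k
          have hy_adj : T.Adj (x k) (stepToward hT (x k) (c (k+1))) :=
            stepToward_adj hT (by omega)
          have hy_dist : T.dist (stepToward hT (x k) (c (k+1))) (c (k+1)) + 1 = d - 1 := by
            have := stepToward_dist hT (a := x k) (b := c (k+1)) (by omega)
            omega
          have hup := hT.isConnected.dist_triangle (u := c 0) (v := c (k+1))
            (w := stepToward hT (x k) (c (k+1)))
          have hlo := hT.isConnected.dist_triangle (u := c 0)
            (v := stepToward hT (x k) (c (k+1))) (w := x k)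
          rw [SimpleGraph.dist_comm (u := c (k+1))] at hup
          rw [dist_adj_one hT hy_adj.symm] at hlo
          have hy_eq : T.dist (c 0) (stepToward hT (x k) (c (k+1))) = d + k - 1 := by omega
          have heq := closer_unique hT hy_adj.symm hxadj.symm (x := c 0)
            (by omega) (by omega)
          have hfin := h1 (k+1)
          rw [← heq, SimpleGraph.dist_comm] at hfin
          omega
        · -- d = 1 : the closer neighbour is the cop's previous position
          have hck_adj : T.Adj (c k) (x k) := by
            rw [← SimpleGraph.dist_eq_one_iff_adj]
            have := h1 k; omega
          have heq := closer_unique hT hck_adj hxadj.symm (x := c 0)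
            (by omega) (by omega)
          exact h5 (by omega) k (heq.symm)
  have hcard := (geo_isPath hT (c 0) (x (Fintype.card V))).length_lt
  rw [geo_length] at hcard
  have := (key (Fintype.card V)).1
  omega

end Grow
end TreeAux

namespace CopsGlue
open CopsRobber TreeAux SimpleGraph

variable {V : Type*} [Fintype V] {T : SimpleGraph V}

/-- The last observed position in a history. -/
noncomputable def lastSome? (h : List (Option V)) : Option V := (h.filterMap id).getLast?

lemma ls_single (o : Option V) : lastSome? [o] = o := by
  cases o <;> simp [lastSome?]

lemma ls_app (h : List (Option V)) (o1 o2 : Option V) :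
    lastSome? (h ++ [o1] ++ [o2]) = (o2.or (o1.or (lastSome? h))) := by
  cases o1 <;> cases o2 <;>
    simp [lastSome?, List.filterMap_append, List.getLast?_append, Option.or]

/-- The raw (unguarded) move of the single cop. -/
noncomputable def rawMove (hT : T.IsTree) (r : V) (ℓ : ℕ) (h : List (Option V)) (pi : V) : V :=
  match lastSome? h with
  | none => (walkDfs T r (ℓ+1) r).getVert ((h.length + 1)/2)
  | some x => stepToward hT pi x

lemma rawMove_none (hT : T.IsTree) (r : V) (ℓ : ℕ) {h : List (Option V)} (pi : V)
    (hls : lastSome? h = none) :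
    rawMove hT r ℓ h pi = (walkDfs T r (ℓ+1) r).getVert ((h.length + 1)/2) := by
  rw [rawMove, hls]

lemma rawMove_some (hT : T.IsTree) (r : V) (ℓ : ℕ) {h : List (Option V)} (pi : V) {x : V}
    (hls : lastSome? h = some x) : rawMove hT r ℓ h pi = stepToward hT pi x := by
  rw [rawMove, hls]

open Classical in
/-- The one-cop strategy: follow the DFS walk while nothing has been seen,
then walk towards the last seen position. -/
noncomputable def copStrat (hT : T.IsTree) (r : V) (ℓ : ℕ) : CopStrategy T 1 where
  init := fun _ => r
  move := fun h p i =>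
    if hc : rawMove hT r ℓ h (p i) = p i ∨ T.Adj (p i) (rawMove hT r ℓ h (p i)) then
      rawMove hT r ℓ h (p i) else p i
  valid := by
    intro h p i
    split
    · next hc => exact hc
    · exact Or.inl rfl

open Classical in
lemma copStrat_move (hT : T.IsTree) (r : V) (ℓ : ℕ) (h : List (Option V)) (q : Fin 1 → V)
    (i : Fin 1) (hc : rawMove hT r ℓ h (q i) = q i ∨ T.Adj (q i) (rawMove hT r ℓ h (q i))) :
    (copStrat hT r ℓ).move h q i = rawMove hT r ℓ h (q i) := by
  simp only [copStrat]
  rw [dif_pos hc]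

lemma obs_eq (ℓ : ℕ) (q : Fin 1 → V) (v : V) :
    obs T (ℓ : ℕ∞) q v = if T.dist (q 0) v ≤ ℓ then some v else none := by
  by_cases hd : T.dist (q 0) v ≤ ℓ
  · rw [obs, if_pos ⟨0, by exact_mod_cast hd⟩, if_pos hd]
  · rw [obs, if_neg ?_, if_neg hd]
    rintro ⟨i, hi⟩
    have : i = 0 := Subsingleton.elim _ _
    rw [this] at hi
    exact hd (by exact_mod_cast hi)

lemma obs_none {ℓ : ℕ} {q : Fin 1 → V} {v : V} (h : obs T (ℓ : ℕ∞) q v = none) :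
    ¬ T.dist (q 0) v ≤ ℓ := by
  intro hd
  rw [obs_eq, if_pos hd] at h
  exact Option.some_ne_none v h

lemma obs_some_of {ℓ : ℕ} {q : Fin 1 → V} {v : V} (hd : T.dist (q 0) v ≤ ℓ) :
    obs T (ℓ : ℕ∞) q v = some v := by
  rw [obs_eq, if_pos hd]

lemma obs_cases {ℓ : ℕ} {q : Fin 1 → V} {v x : V} (h : obs T (ℓ : ℕ∞) q v = some x) :
    x = v ∧ T.dist (q 0) v ≤ ℓ := by
  by_cases hd : T.dist (q 0) v ≤ ℓ
  · rw [obs_eq, if_pos hd] at h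
    exact ⟨(Option.some_injective _ h).symm, hd⟩
  · rw [obs_eq, if_neg hd] at h
    exact absurd h.symm (Option.some_ne_none x)

end CopsGlue

namespace CopsGlue
open CopsRobber TreeAux SimpleGraph

variable {V : Type*} [Fintype V] {T : SimpleGraph V}

/-- Cop position at time `t`. -/
noncomputable def pp (hT : T.IsTree) (r : V) (ℓ : ℕ) (R : ℕ → V) (t : ℕ) : V :=
  (play T (ℓ : ℕ∞) (copStrat hT r ℓ) R t).1 0

/-- Observation history at time `t`. -/
noncomputable def hh (hT : T.IsTree) (r : V) (ℓ : ℕ) (R : ℕ → V) (t : ℕ) : List (Option V) :=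
  (play T (ℓ : ℕ∞) (copStrat hT r ℓ) R t).2

variable (hT : T.IsTree) (r : V) (ℓ : ℕ) (R : ℕ → V)

lemma pp_zero : pp hT r ℓ R 0 = r := rfl

lemma cops_fun_eq : ∀ t i, (play T (ℓ : ℕ∞) (copStrat hT r ℓ) R t).1 i = pp hT r ℓ R t := by
  intro t
  induction t with
  | zero => intro i; rfl
  | succ t ih =>
    intro i
    have hq : (play T (ℓ : ℕ∞) (copStrat hT r ℓ) R t).1 i
        = (play T (ℓ : ℕ∞) (copStrat hT r ℓ) R t).1 0 := (ih i).trans (ih 0).symm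
    show (copStrat hT r ℓ).move _ _ i = (copStrat hT r ℓ).move _ _ 0
    classical
    exact congrArg (fun z : V =>
      if _ : rawMove hT r ℓ (hh hT r ℓ R t) z = z ∨ T.Adj z (rawMove hT r ℓ (hh hT r ℓ R t) z)
      then rawMove hT r ℓ (hh hT r ℓ R t) z else z) hq

lemma pp_succ (t : ℕ) :
    pp hT r ℓ R (t+1) = (copStrat hT r ℓ).move (hh hT r ℓ R t)
      ((play T (ℓ : ℕ∞) (copStrat hT r ℓ) R t).1) 0 := rfl

lemma hh_zero : hh hT r ℓ R 0 = [obs T (ℓ : ℕ∞) (fun _ : Fin 1 => r) (R 0)] := rfl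

lemma hh_succ (t : ℕ) :
    hh hT r ℓ R (t+1) = hh hT r ℓ R t
      ++ [obs T (ℓ : ℕ∞) ((play T (ℓ : ℕ∞) (copStrat hT r ℓ) R (t+1)).1) (R t)]
      ++ [obs T (ℓ : ℕ∞) ((play T (ℓ : ℕ∞) (copStrat hT r ℓ) R (t+1)).1) (R (t+1))] := rfl

lemma hh_len : ∀ t, (hh hT r ℓ R t).length = 2*t+1 := by
  intro t
  induction t with
  | zero => rfl
  | succ t ih =>
    rw [hh_succ, List.length_append, List.length_append, ih,
      List.length_singleton, List.length_singleton]
    omega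

/-- The fixed DFS walk position. -/
noncomputable def bigW (t : ℕ) : V := (walkDfs T r (ℓ+1) r).getVert t

lemma bigW_step (t : ℕ) :
    bigW (T := T) r ℓ (t+1) = bigW (T := T) r ℓ t
      ∨ T.Adj (bigW (T := T) r ℓ t) (bigW (T := T) r ℓ (t+1)) := by
  rcases lt_or_ge t (walkDfs T r (ℓ+1) r).length with h | h
  · exact Or.inr ((walkDfs T r (ℓ+1) r).adj_getVert_succ h)
  · left
    rw [bigW, bigW, (walkDfs T r (ℓ+1) r).getVert_of_length_le h,
      (walkDfs T r (ℓ+1) r).getVert_of_length_le (by omega)]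

lemma pp_succ_none (t : ℕ) (hls : lastSome? (hh hT r ℓ R t) = none)
    (hprev : pp hT r ℓ R t = bigW (T := T) r ℓ t) :
    pp hT r ℓ R (t+1) = bigW (T := T) r ℓ (t+1) := by
  have hraw : rawMove hT r ℓ (hh hT r ℓ R t) (pp hT r ℓ R t)
      = bigW (T := T) r ℓ (t+1) := by
    rw [rawMove_none hT r ℓ _ hls, hh_len]
    have h2 : (2*t+1+1)/2 = t + 1 := by omega
    rw [h2]
    rfl
  have hc : rawMove hT r ℓ (hh hT r ℓ R t) (pp hT r ℓ R t) = pp hT r ℓ R t ∨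
      T.Adj (pp hT r ℓ R t) (rawMove hT r ℓ (hh hT r ℓ R t) (pp hT r ℓ R t)) := by
    rw [hraw, hprev]
    exact bigW_step (T := T) r ℓ t
  rw [pp_succ, copStrat_move hT r ℓ _ _ _ hc]
  exact hraw

lemma pp_succ_some (t : ℕ) {x : V} (hls : lastSome? (hh hT r ℓ R t) = some x)
    (hne : T.dist (pp hT r ℓ R t) x ≠ 0) :
    pp hT r ℓ R (t+1) = stepToward hT (pp hT r ℓ R t) x := by
  have hraw : rawMove hT r ℓ (hh hT r ℓ R t) (pp hT r ℓ R t)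
      = stepToward hT (pp hT r ℓ R t) x := by
    rw [rawMove_some hT r ℓ _ hls]
  have hc : rawMove hT r ℓ (hh hT r ℓ R t) (pp hT r ℓ R t) = pp hT r ℓ R t ∨
      T.Adj (pp hT r ℓ R t) (rawMove hT r ℓ (hh hT r ℓ R t) (pp hT r ℓ R t)) := by
    rw [hraw]
    exact Or.inr (stepToward_adj hT hne)
  rw [pp_succ, copStrat_move hT r ℓ _ _ _ hc]
  exact hraw

end CopsGlue

namespace CopsGlue
open CopsRobber TreeAux SimpleGraph

variable {V : Type*} [Fintype V] {T : SimpleGraph V}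

theorem captures_all (hT : T.IsTree) (r : V) (ℓ : ℕ)
    (hr : ∀ u, T.dist r u ≤ 2*ℓ+1) (R : ℕ → V) (hR : RobberWalk T R) :
    Captures T (ℓ : ℕ∞) (copStrat hT r ℓ) R := by
  classical
  by_contra hC
  have hcap1 : ∀ t, pp hT r ℓ R t ≠ R t := fun t h => hC ⟨t, 0, Or.inl h⟩
  have hcap2 : ∀ t, pp hT r ℓ R (t+1) ≠ R t := fun t h => hC ⟨t, 0, Or.inr h⟩
  have hRd : ∀ t, T.dist (R t) (R (t+1)) ≤ 1 := by
    intro t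
    rcases hR t with he | ha
    · rw [he, SimpleGraph.dist_self]; omega
    · rw [dist_adj_one hT ha]
  -- Step 1: the cops must eventually observe something
  have hsome : ¬ (∀ t, lastSome? (hh hT r ℓ R t) = none) := by
    intro Hnone
    have hnone2 : ∀ t,
        obs T (ℓ:ℕ∞) ((play T (ℓ:ℕ∞) (copStrat hT r ℓ) R (t+1)).1) (R t) = none ∧
        obs T (ℓ:ℕ∞) ((play T (ℓ:ℕ∞) (copStrat hT r ℓ) R (t+1)).1) (R (t+1)) = none := by
      intro t
      have h := Hnone (t+1)
      rw [hh_succ, ls_app, Option.or_eq_none_iff, Option.or_eq_none_iff] at h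
      exact ⟨h.2.1, h.1⟩
    have hfresh : ∀ t, ¬ T.dist (pp hT r ℓ R t) (R t) ≤ ℓ := by
      intro t
      cases t with
      | zero =>
        have h := Hnone 0
        rw [hh_zero, ls_single] at h
        exact obs_none h
      | succ s => exact obs_none (hnone2 s).2
    have hstale : ∀ t, ¬ T.dist (pp hT r ℓ R (t+1)) (R t) ≤ ℓ := fun t => obs_none (hnone2 t).1
    have hfollow : ∀ t, pp hT r ℓ R t = (walkDfs T r (ℓ+1) r).getVert t := by
      intro t
      induction t with
      | zero => exact (pp_zero hT r ℓ R).trans (SimpleGraph.Walk.getVert_zero _).symm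
      | succ t ih => exact pp_succ_none hT r ℓ R t (Hnone t) ih
    exact conf_false hT hr hR hfollow hfresh hstale
  -- Step 2: the invariant after the first observation
  obtain ⟨t0, ht0⟩ := not_forall.mp hsome
  have hInv_exists : ∃ t, ∃ x, lastSome? (hh hT r ℓ R t) = some x ∧
      T.dist (pp hT r ℓ R t) x ≤ ℓ ∧ (x = R t ∨ ∃ s, t = s+1 ∧ x = R s) := by
    have hex : ∃ t, lastSome? (hh hT r ℓ R t) ≠ none := ⟨t0, ht0⟩
    rcases ht1eq : Nat.find hex with _ | s
    · have h0 : lastSome? (hh hT r ℓ R 0) ≠ none := ht1eq ▸ Nat.find_spec hex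
      rw [hh_zero, ls_single] at h0
      obtain ⟨x, hx⟩ := Option.ne_none_iff_exists'.mp h0
      obtain ⟨hxv, hdx⟩ := obs_cases hx
      refine ⟨0, x, ?_, ?_, Or.inl hxv⟩
      · rw [hh_zero, ls_single]; exact hx
      · rw [hxv]; exact hdx
    · have hs_none : lastSome? (hh hT r ℓ R s) = none := by
        by_contra hne
        have h := Nat.find_min' hex hne
        omega
      have hs1 : lastSome? (hh hT r ℓ R (s+1)) ≠ none := ht1eq ▸ Nat.find_spec hex
      rw [hh_succ, ls_app, hs_none] at hs1
      cases ho2 : obs T (ℓ:ℕ∞) ((play T (ℓ:ℕ∞) (copStrat hT r ℓ) R (s+1)).1) (R (s+1)) with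
      | some x =>
        obtain ⟨hxv, hdx⟩ := obs_cases ho2
        refine ⟨s+1, x, ?_, ?_, Or.inl hxv⟩
        · rw [hh_succ, ls_app, ho2]; rfl
        · rw [hxv]; exact hdx
      | none =>
        rw [ho2] at hs1
        cases ho1 : obs T (ℓ:ℕ∞) ((play T (ℓ:ℕ∞) (copStrat hT r ℓ) R (s+1)).1) (R s) with
        | none => rw [ho1] at hs1; simp at hs1
        | some x =>
          obtain ⟨hxv, hdx⟩ := obs_cases ho1
          refine ⟨s+1, x, ?_, ?_, Or.inr ⟨s, rfl, hxv⟩⟩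
          · rw [hh_succ, ls_app, ho2, ho1]; rfl
          · rw [hxv]; exact hdx
  obtain ⟨t1, hInv1⟩ := hInv_exists
  -- Step 3: the invariant is preserved
  have hInv_step : ∀ t, (∃ x, lastSome? (hh hT r ℓ R t) = some x ∧
      T.dist (pp hT r ℓ R t) x ≤ ℓ ∧ (x = R t ∨ ∃ s, t = s+1 ∧ x = R s)) →
      (∃ x, lastSome? (hh hT r ℓ R (t+1)) = some x ∧
      T.dist (pp hT r ℓ R (t+1)) x ≤ ℓ ∧ (x = R (t+1) ∨ ∃ s, t+1 = s+1 ∧ x = R s)) := by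
    rintro t ⟨x, hls, hdx, hform⟩
    have hne0 : T.dist (pp hT r ℓ R t) x ≠ 0 := by
      intro h0
      have hpx := (hT.isConnected.dist_eq_zero_iff).mp h0
      rcases hform with rfl | ⟨s, heq, rfl⟩
      · exact hcap1 t hpx
      · subst heq; exact hcap2 s hpx
    have hmv := pp_succ_some hT r ℓ R t hls hne0
    have hd1 : T.dist (pp hT r ℓ R (t+1)) x + 1 = T.dist (pp hT r ℓ R t) x := by
      rw [hmv]; exact stepToward_dist hT hne0
    have hdRt : T.dist (pp hT r ℓ R (t+1)) (R t) ≤ ℓ := by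
      rcases hform with rfl | ⟨s, heq, rfl⟩
      · omega
      · have heq' : t = s + 1 := heq
        subst heq'
        have htri := hT.isConnected.dist_triangle (u := pp hT r ℓ R (s+1+1)) (v := R s)
          (w := R (s+1))
        have := hRd s
        omega
    have ho1 : obs T (ℓ:ℕ∞) ((play T (ℓ:ℕ∞) (copStrat hT r ℓ) R (t+1)).1) (R t)
        = some (R t) := obs_some_of hdRt
    by_cases hfr : T.dist (pp hT r ℓ R (t+1)) (R (t+1)) ≤ ℓ
    · refine ⟨R (t+1), ?_, hfr, Or.inl rfl⟩
      rw [hh_succ, ls_app, obs_some_of hfr]; rfl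
    · have ho2 : obs T (ℓ:ℕ∞) ((play T (ℓ:ℕ∞) (copStrat hT r ℓ) R (t+1)).1) (R (t+1))
          = none := by
        rw [obs_eq, if_neg (show ¬ T.dist ((play T (ℓ:ℕ∞) (copStrat hT r ℓ) R (t+1)).1 0)
          (R (t+1)) ≤ ℓ from hfr)]
      refine ⟨R t, ?_, hdRt, Or.inr ⟨t, rfl, rfl⟩⟩
      rw [hh_succ, ls_app, ho2, ho1]; rfl
  have hInv_all : ∀ t, t1 ≤ t → (∃ x, lastSome? (hh hT r ℓ R t) = some x ∧
      T.dist (pp hT r ℓ R t) x ≤ ℓ ∧ (x = R t ∨ ∃ s, t = s+1 ∧ x = R s)) := by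
    intro t ht
    induction t, ht using Nat.le_induction with
    | base => exact hInv1
    | succ t ht ih => exact hInv_step t ih
  -- the fresh-sight predicate is absorbing
  have fresh_persist : ∀ t, T.dist (pp hT r ℓ R t) (R t) ≤ ℓ →
      lastSome? (hh hT r ℓ R t) = some (R t) := by
    intro t hf
    cases t with
    | zero => rw [hh_zero, ls_single]; exact obs_some_of hf
    | succ s => rw [hh_succ, ls_app, obs_some_of hf]; rfl
  have fresh_step : ∀ t, T.dist (pp hT r ℓ R t) (R t) ≤ ℓ →
      T.dist (pp hT r ℓ R (t+1)) (R (t+1)) ≤ T.dist (pp hT r ℓ R t) (R t) ∧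
      T.dist (pp hT r ℓ R (t+1)) (R t) + 1 = T.dist (pp hT r ℓ R t) (R t) ∧
      pp hT r ℓ R (t+1) = stepToward hT (pp hT r ℓ R t) (R t) := by
    intro t hf
    have hls := fresh_persist t hf
    have hne0 : T.dist (pp hT r ℓ R t) (R t) ≠ 0 :=
      fun h0 => hcap1 t ((hT.isConnected.dist_eq_zero_iff).mp h0)
    have hmv := pp_succ_some hT r ℓ R t hls hne0
    have hd1 : T.dist (pp hT r ℓ R (t+1)) (R t) + 1 = T.dist (pp hT r ℓ R t) (R t) := by
      rw [hmv]; exact stepToward_dist hT hne0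
    have htri := hT.isConnected.dist_triangle (u := pp hT r ℓ R (t+1)) (v := R t)
      (w := R (t+1))
    have := hRd t
    exact ⟨by omega, hd1, hmv⟩
  by_cases hF : ∃ t, T.dist (pp hT r ℓ R t) (R t) ≤ ℓ
  · -- fresh chase
    obtain ⟨t2, hFr⟩ := hF
    have hfresh_all : ∀ k, T.dist (pp hT r ℓ R (t2+k)) (R (t2+k)) ≤ ℓ := by
      intro k
      induction k with
      | zero => exact hFr
      | succ k ih => exact le_trans (fresh_step (t2+k) ih).1 ih
    obtain ⟨K, hK⟩ := eventually_const (fun k => T.dist (pp hT r ℓ R (t2+k)) (R (t2+k)))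
      (fun k => (fresh_step (t2+k) (hfresh_all k)).1)
    have hd2 : 2 ≤ T.dist (pp hT r ℓ R (t2+K)) (R (t2+K)) := by
      have h1le : T.dist (pp hT r ℓ R (t2+K)) (R (t2+K)) ≠ 0 :=
        fun h0 => hcap1 _ ((hT.isConnected.dist_eq_zero_iff).mp h0)
      by_contra hlt
      have hone : T.dist (pp hT r ℓ R (t2+K)) (R (t2+K)) = 1 := by omega
      have := (fresh_step (t2+K) (hfresh_all K)).2.1
      rw [hone] at this
      exact hcap2 (t2+K) ((hT.isConnected.dist_eq_zero_iff).mp (by omega))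
    refine grow hT (fun k => pp hT r ℓ R (t2+K+k)) (fun k => R (t2+K+k))
      (T.dist (pp hT r ℓ R (t2+K)) (R (t2+K))) (by omega) ?_ ?_ ?_ ?_ ?_
    · intro k
      show T.dist (pp hT r ℓ R (t2+K+k)) (R (t2+K+k)) = _
      have := hK (K+k) (Nat.le_add_right _ _)
      rwa [← Nat.add_assoc] at this
    · intro k
      show T.dist (pp hT r ℓ R (t2+K+k+1)) (R (t2+K+k)) = _
      have hfr := hfresh_all (K+k)
      rw [← Nat.add_assoc] at hfr
      have h2 := (fresh_step (t2+K+k) hfr).2.1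
      have h1 := hK (K+k) (Nat.le_add_right _ _)
      rw [← Nat.add_assoc] at h1
      omega
    · intro k
      show pp hT r ℓ R (t2+K+k+1) = pp hT r ℓ R (t2+K+k) ∨
        T.Adj (pp hT r ℓ R (t2+K+k)) (pp hT r ℓ R (t2+K+k+1))
      have hfr := hfresh_all (K+k)
      rw [← Nat.add_assoc] at hfr
      exact Or.inr (by
        rw [(fresh_step (t2+K+k) hfr).2.2]
        exact stepToward_adj hT
          (fun h0 => hcap1 _ ((hT.isConnected.dist_eq_zero_iff).mp h0)))
    · intro k
      show R (t2+K+k+1) = R (t2+K+k) ∨ T.Adj (R (t2+K+k)) (R (t2+K+k+1))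
      exact hR (t2+K+k)
    · intro hd1'
      exact absurd hd1' (by omega)
  · -- stale chase
    push_neg at hF
    obtain ⟨x1, hls1, hdx1, hform1⟩ := hInv_all t1 le_rfl
    obtain ⟨s1, hs1eq⟩ : ∃ s, t1 = s + 1 := by
      rcases hform1 with rfl | ⟨s, heq, -⟩
      · exact absurd hdx1 (by have := hF t1; omega)
      · exact ⟨s, heq⟩
    have hstale : ∀ k, lastSome? (hh hT r ℓ R (s1+1+k)) = some (R (s1+k)) ∧
        T.dist (pp hT r ℓ R (s1+1+k)) (R (s1+k)) ≤ ℓ := by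
      intro k
      obtain ⟨x, hls, hdx, hform⟩ := hInv_all (s1+1+k) (by omega)
      rcases hform with rfl | ⟨s, heq, rfl⟩
      · exact absurd hdx (by have := hF (s1+1+k); omega)
      · have hseq : s = s1 + k := by omega
        subst hseq
        exact ⟨hls, hdx⟩
    have hgne : ∀ k, T.dist (pp hT r ℓ R (s1+1+k)) (R (s1+k)) ≠ 0 := by
      intro k h0
      have hpx := (hT.isConnected.dist_eq_zero_iff).mp h0
      refine hcap2 (s1+k) ?_
      rw [show s1+k+1 = s1+1+k by omega]
      exact hpx
    have hmvk : ∀ k, pp hT r ℓ R (s1+1+k+1) = stepToward hT (pp hT r ℓ R (s1+1+k)) (R (s1+k)) :=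
      fun k => pp_succ_some hT r ℓ R (s1+1+k) (hstale k).1 (hgne k)
    have hgstep : ∀ k, T.dist (pp hT r ℓ R (s1+1+(k+1))) (R (s1+(k+1)))
        ≤ T.dist (pp hT r ℓ R (s1+1+k)) (R (s1+k)) := by
      intro k
      have hd1 : T.dist (pp hT r ℓ R (s1+1+k+1)) (R (s1+k)) + 1
          = T.dist (pp hT r ℓ R (s1+1+k)) (R (s1+k)) := by
        rw [hmvk k]; exact stepToward_dist hT (hgne k)
      have htri := hT.isConnected.dist_triangle (u := pp hT r ℓ R (s1+1+k+1)) (v := R (s1+k))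
        (w := R (s1+k+1))
      have := hRd (s1+k)
      show T.dist (pp hT r ℓ R (s1+1+k+1)) (R (s1+k+1)) ≤ _
      omega
    obtain ⟨K, hK⟩ := eventually_const
      (fun k => T.dist (pp hT r ℓ R (s1+1+k)) (R (s1+k))) hgstep
    refine grow hT (fun k => pp hT r ℓ R (s1+1+K+k)) (fun k => R (s1+K+k))
      (T.dist (pp hT r ℓ R (s1+1+K)) (R (s1+K))) (by have := hgne K; omega) ?_ ?_ ?_ ?_ ?_
    · intro k
      show T.dist (pp hT r ℓ R (s1+1+K+k)) (R (s1+K+k)) = _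
      have := hK (K+k) (Nat.le_add_right _ _)
      have hi1 : s1+1+(K+k) = s1+1+K+k := by omega
      have hi2 : s1+(K+k) = s1+K+k := by omega
      rwa [hi1, hi2] at this
    · intro k
      show T.dist (pp hT r ℓ R (s1+1+K+k+1)) (R (s1+K+k)) = _
      have hd1 : T.dist (pp hT r ℓ R (s1+1+(K+k)+1)) (R (s1+(K+k))) + 1
          = T.dist (pp hT r ℓ R (s1+1+(K+k))) (R (s1+(K+k))) := by
        rw [hmvk (K+k)]; exact stepToward_dist hT (hgne (K+k))
      have h1 := hK (K+k) (Nat.le_add_right _ _)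
      have hi1 : s1+1+(K+k) = s1+1+K+k := by omega
      have hi2 : s1+(K+k) = s1+K+k := by omega
      rw [hi1, hi2] at hd1 h1
      omega
    · intro k
      show pp hT r ℓ R (s1+1+K+k+1) = pp hT r ℓ R (s1+1+K+k) ∨
        T.Adj (pp hT r ℓ R (s1+1+K+k)) (pp hT r ℓ R (s1+1+K+k+1))
      refine Or.inr ?_
      have hmv := hmvk (K+k)
      have hg := hgne (K+k)
      have hi1 : s1+1+(K+k) = s1+1+K+k := by omega
      have hi2 : s1+(K+k) = s1+K+k := by omega
      rw [hi1, hi2] at hmv hg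
      rw [hmv]
      exact stepToward_adj hT hg
    · intro k
      show R (s1+K+k+1) = R (s1+K+k) ∨ T.Adj (R (s1+K+k)) (R (s1+K+k+1))
      exact hR (s1+K+k)
    · intro _ k hxc
      refine hcap1 (s1+K+k+1) ?_
      have h1 : pp hT r ℓ R (s1+1+K+k) = R (s1+K+k+1) :=
        (show R (s1+K+(k+1)) = pp hT r ℓ R (s1+1+K+k) from hxc).symm
      have h2 : pp hT r ℓ R (s1+K+k+1) = pp hT r ℓ R (s1+1+K+k) := by
        rw [show s1+K+k+1 = s1+1+K+k by omega]
      rw [h2]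
      exact h1
end CopsGlue

open CopsRobber in
/-- if `T` is a tree of height at most `2ℓ+1` (some root has eccentricity at
most `2ℓ+1`), then `c_ℓ(T) = 1`. -/
theorem tree_small_height_visCopNumber {V : Type*} [Fintype V] (T : SimpleGraph V)
    (hT : T.IsTree) (ℓ : ℕ) (hr : ∃ r : V, ∀ u : V, T.dist r u ≤ 2 * ℓ + 1) :
    visCopNumber T (ℓ : ℕ∞) = 1 := by
  classical
  obtain ⟨r, hr⟩ := hr
  have h1 : 1 ∈ {k | ∃ σ : CopStrategy T k, ∀ R, RobberWalk T R → Captures T (ℓ : ℕ∞) σ R} :=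
    ⟨CopsGlue.copStrat hT r ℓ, fun R hR => CopsGlue.captures_all hT r ℓ hr R hR⟩
  have h0 : (0:ℕ) ∉ {k | ∃ σ : CopStrategy T k, ∀ R, RobberWalk T R → Captures T (ℓ : ℕ∞) σ R} := by
    rintro ⟨σ0, hσ0⟩
    obtain ⟨t, i, -⟩ := hσ0 (fun _ => r) (fun t => Or.inl rfl)
    exact i.elim0
  rw [visCopNumber]
  refine le_antisymm (Nat.sInf_le h1) ?_
  by_contra hlt
  push_neg at hlt
  have h : sInf {k | ∃ σ : CopStrategy T k, ∀ R, RobberWalk T R → Captures T (ℓ : ℕ∞) σ R} = 0 := by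
    omega
  rcases Nat.sInf_eq_zero.mp h with hc | hc
  · exact h0 hc
  · rw [hc] at h1
    exact h1
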